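/- The linear vector field with components (2x₂ - 6x₃, 3x₃, -2y₂ + 6y₃, -3y₃) (the linear part of v at the origin) admits the rational first integrals (x₂+6x₃)³/x₃² and (y₂+6y₃)³/y₃²: both are annihilated by the derivation defined by this linear vector field. -/
import Mathlib


open MvPolynomial

/-- The linear vector field `(2x₂ - 6x₃, 3x₃, -2y₂ + 6y₃, -3y₃)` on ℂ⁴ (the linear part of
`v` at the origin), as a derivation of ℚ[x₂,x₃,y₂,y₃] (`X 0 = x₂, X 1 = x₃, X 2 = y₂, X 3 = y₃`). -/
noncomputable def wLin : Derivation ℚ (MvPolynomial (Fin 4) ℚ) (MvPolynomial (Fin 4) ℚ) :=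
  mkDerivation ℚ ![2 * X 0 - 6 * X 1, 3 * X 1, -2 * X 2 + 6 * X 3, -3 * X 3]

lemma wLin_six : (mkDerivation ℚ ![2 * X 0 - 6 * X 1, 3 * X 1, -2 * X 2 + 6 * X 3, -3 * X 3] : Derivation ℚ (MvPolynomial (Fin 4) ℚ) (MvPolynomial (Fin 4) ℚ)) 6 = 0 := by
  have : (6 : MvPolynomial (Fin 4) ℚ) = algebraMap ℚ _ 6 := by
    rw [MvPolynomial.algebraMap_eq, map_ofNat]
  rw [this, Derivation.map_algebraMap]

/-- The rational functions `(x₂+6x₃)³/x₃²` and `(y₂+6y₃)³/y₃²` are first integrals of the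
linear vector field: the derivation of each fraction along the field vanishes identically.
(For `F = N/D`, `w(F) = 0` on `{D ≠ 0}` iff the quotient-rule numerator
`w(N)·D - N·w(D)` is the zero polynomial.) -/
theorem first_integrals_linear_part :
    wLin ((X 0 + 6 * X 1) ^ 3) * X 1 ^ 2 - (X 0 + 6 * X 1) ^ 3 * wLin (X 1 ^ 2) = 0 ∧
    wLin ((X 2 + 6 * X 3) ^ 3) * X 3 ^ 2 - (X 2 + 6 * X 3) ^ 3 * wLin (X 3 ^ 2) = 0 := by
  constructor <;>
  · simp only [wLin, Derivation.leibniz_pow, Derivation.leibniz, map_add, Derivation.map_smul,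
      map_mul, Derivation.map_natCast, mkDerivation_X, Matrix.cons_val_zero, Matrix.cons_val_one,
      Matrix.head_cons, map_ofNat, Derivation.map_one_eq_zero, smul_eq_mul,
      Matrix.cons_val_two, Matrix.cons_val_three, Matrix.tail_cons, wLin_six]
    ring
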